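/- Let K be a field, V and W finite-dimensional K-vector spaces, B a nondegenerate symmetric bilinear form on V, and B' a nondegenerate symmetric bilinear form on W. Let U ⊆ V be a subspace which is a Lagrangian of B, i.e. U equals its own orthogonal complement with respect to B. Then the image of U ⊗ W in V ⊗ W is a Lagrangian of the tensor product bilinear form B ⊗ B' on V ⊗_K W, i.e. it equals its own orthogonal complement with respect to B ⊗ B'. -/

import Mathlib

open TensorProduct

private theorem tmul_nondeg
    (K V W : Type*) [Field K]
    [AddCommGroup V] [Module K V] [FiniteDimensional K V]
    [AddCommGroup W] [Module K W] [FiniteDimensional K W]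
    (B : LinearMap.BilinForm K V) (B' : LinearMap.BilinForm K W)
    (hBnd : B.Nondegenerate) (hB'nd : B'.Nondegenerate) :
    LinearMap.BilinForm.Nondegenerate
      (LinearMap.BilinForm.tmul B B' : LinearMap.BilinForm K (V ⊗[K] W)) := by
  let b := Module.finBasis K V
  let c := Module.finBasis K W
  have key : LinearMap.toMatrix₂ (b.tensorProduct c) (b.tensorProduct c)
      (LinearMap.BilinForm.tmul B B') =
      Matrix.kroneckerMap (· * ·) (LinearMap.toMatrix₂ b b B) (LinearMap.toMatrix₂ c c B') := by
    ext ⟨i, j⟩ ⟨k, l⟩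
    simp [LinearMap.toMatrix₂_apply, Module.Basis.tensorProduct_apply,
      LinearMap.BilinForm.tensorDistrib_tmul, Matrix.kroneckerMap_apply]
    ring
  have this := LinearMap.separatingLeft_iff_det_ne_zero
    (B := LinearMap.BilinForm.tmul B B') (b.tensorProduct c)
  rw [key] at this
  have hsB : B.SeparatingLeft := hBnd.1
  have hsB' : B'.SeparatingLeft := hB'nd.1
  have h1 : (LinearMap.toMatrix₂ b b B).det ≠ 0 :=
    (LinearMap.separatingLeft_iff_det_ne_zero b).mp hsB
  have h2 : (LinearMap.toMatrix₂ c c B').det ≠ 0 :=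
    (LinearMap.separatingLeft_iff_det_ne_zero c).mp hsB'
  have hsep : LinearMap.SeparatingLeft (LinearMap.BilinForm.tmul B B') := by
    refine this.mpr ?_
    rw [Matrix.det_kronecker]
    exact mul_ne_zero (pow_ne_zero _ h1) (pow_ne_zero _ h2)
  exact ⟨hsep, (LinearMap.separatingRight_iff_det_ne_zero (b.tensorProduct c)).mpr
    ((LinearMap.separatingLeft_iff_det_ne_zero (b.tensorProduct c)).mp hsep)⟩

/-- If `U` is a Lagrangian of a nondegenerate symmetric bilinear form `B` on `V`
(i.e. `U` equals its own orthogonal complement), and `B'` is a nondegenerate symmetric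
bilinear form on `W`, then the image of `U ⊗ W` in `V ⊗ W` is a Lagrangian of the tensor
product form `B ⊗ B'`. -/
theorem lagrangian_tensor
    (K V W : Type*) [Field K]
    [AddCommGroup V] [Module K V] [FiniteDimensional K V]
    [AddCommGroup W] [Module K W] [FiniteDimensional K W]
    (B : LinearMap.BilinForm K V) (B' : LinearMap.BilinForm K W)
    (hBsymm : ∀ x y : V, B x y = B y x) (hBnd : B.Nondegenerate)
    (hB'symm : ∀ x y : W, B' x y = B' y x) (hB'nd : B'.Nondegenerate)
    (U : Submodule K V) (hU : U = B.orthogonal U) :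
    LinearMap.range (TensorProduct.map U.subtype (LinearMap.id : W →ₗ[K] W)) =
      LinearMap.BilinForm.orthogonal
        (LinearMap.BilinForm.tmul B B' : LinearMap.BilinForm K (V ⊗[K] W))
        (LinearMap.range (TensorProduct.map U.subtype (LinearMap.id : W →ₗ[K] W))) := by
  classical
  set T : LinearMap.BilinForm K (V ⊗[K] W) := LinearMap.BilinForm.tmul B B' with hT
  set f : U ⊗[K] W →ₗ[K] V ⊗[K] W := TensorProduct.map U.subtype (LinearMap.id : W →ₗ[K] W)
    with hf
  set S : Submodule K (V ⊗[K] W) := LinearMap.range f with hS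
  -- reflexivity
  have hBrefl : B.IsRefl := fun x y h => by rw [← hBsymm]; exact h
  have hTsymm : T.IsSymm := LinearMap.BilinForm.isSymm_iff.mpr <| LinearMap.IsSymm.tmul
    ⟨fun x y => hBsymm x y⟩ ⟨fun x y => hB'symm x y⟩
  have hTrefl : T.IsRefl := hTsymm.isRefl
  have hTnd : T.Nondegenerate := tmul_nondeg K V W B B' hBnd hB'nd
  -- values of T on S vanish
  have hzero : ∀ z z' : U ⊗[K] W, T (f z) (f z') = 0 := by
    intro z z'
    induction z with
    | zero => simp
    | add a b ha hb => simp [map_add, LinearMap.add_apply, ha, hb]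
    | tmul u w =>
      induction z' with
      | zero => simp
      | add a b ha hb => simp [map_add, ha, hb]
      | tmul u' w' =>
        have hBu : B u u' = 0 := by
          have : (u' : V) ∈ B.orthogonal U := hU ▸ u'.2
          exact this u u.2
        simp [hf, hT, TensorProduct.map_tmul, LinearMap.BilinForm.tensorDistrib_tmul, hBu]
  have hle : S ≤ T.orthogonal S := by
    rintro x ⟨z', rfl⟩
    rw [LinearMap.BilinForm.mem_orthogonal_iff]
    rintro n ⟨z, rfl⟩
    exact hzero z z'
  -- finrank computations
  have hinj : Function.Injective f := by
    have : Function.Injective (LinearMap.rTensor W U.subtype) :=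
      Module.Flat.rTensor_preserves_injective_linearMap U.subtype U.injective_subtype
    exact this
  have hSrank : Module.finrank K S = Module.finrank K U * Module.finrank K W := by
    rw [hS, LinearMap.finrank_range_of_inj hinj, Module.finrank_tensorProduct]
  have hUrank : Module.finrank K U + Module.finrank K U = Module.finrank K V := by
    have h1 := LinearMap.BilinForm.finrank_orthogonal hBnd U
    have h2 : Module.finrank K U ≤ Module.finrank K V := Submodule.finrank_le U
    rw [← hU] at h1
    omega
  have horth := LinearMap.BilinForm.finrank_orthogonal hTnd S
  have htot : Module.finrank K (V ⊗[K] W) = Module.finrank K V * Module.finrank K W :=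
    Module.finrank_tensorProduct
  have hfin : Module.finrank K (T.orthogonal S) ≤ Module.finrank K S := by
    rw [horth, hSrank, htot, ← hUrank, add_mul]
    omega
  exact Submodule.eq_of_le_of_finrank_le hle hfin
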